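/- Let v be a positive random variable with continuous cumulative distribution function, E[v²] < ∞, and P(v > x) > 0 for all x ≥ 0, whose tail F̄(x) = P(v > x) is rapidly varying with index −∞ (lim_{x→∞} F̄(tx)/F̄(x) = 0 for all t > 1). Set λ = 1/E[v], S(x) = 1/E[v·1_{v>x}], S⁻¹(r) = inf{x ≥ 0 : S(x) > r}, and c^r = S⁻¹(r). Let (r_n) be a strictly increasing sequence with r_n > λ and r_n → ∞, and for each n let λ^{r_n} > 0 be such that r_n·(λ^{r_n}·E[v] − 1) → κ for some κ ∈ ℝ. Define ρ^{r_n}_x = λ^{r_n}·E[v·1_{v≤x}]. Then as n → ∞: (i) for every a ∈ [0,1), r_n·(ρ^{r_n}_{a c^{r_n}} − 1) → −∞; (ii) for a = 1, r_n·(ρ^{r_n}_{c^{r_n}} − 1) → κ − λ; (iii) for every a > 1, r_n·(ρ^{r_n}_{a c^{r_n}} − 1) → κ. -/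

import Mathlib

open MeasureTheory Filter

/-- Limiting behaviour of the drift terms `r(ρ^r_{a c^r} − 1)`: they tend to `−∞` for
`a ∈ [0,1)`, to `κ − λ` for `a = 1`, and to `κ` for `a > 1`. -/
theorem stmt10 {Ω : Type*} [MeasurableSpace Ω] (μ : Measure Ω) [IsProbabilityMeasure μ]
    (v : Ω → ℝ) (hvm : Measurable v) (hv0 : ∀ ω, 0 < v ω)
    (hv2 : Integrable (fun ω => (v ω) ^ 2) μ)
    (hcdf : Continuous (fun x : ℝ => (μ {ω | v ω ≤ x}).toReal))
    (hpos : ∀ x : ℝ, 0 ≤ x → 0 < (μ {ω | x < v ω}).toReal)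
    (hrv : ∀ t : ℝ, 1 < t →
      Tendsto (fun x => (μ {ω | t * x < v ω}).toReal / (μ {ω | x < v ω}).toReal)
        atTop (nhds 0))
    (lam : ℝ) (hlam : lam = 1 / ∫ ω, v ω ∂μ)
    (S : ℝ → ℝ) (hS : ∀ x, S x = 1 / ∫ ω, Set.indicator {ω | x < v ω} v ω ∂μ)
    (Sinv : ℝ → ℝ) (hSinv : ∀ r, Sinv r = sInf {x : ℝ | 0 ≤ x ∧ r < S x})
    (rseq : ℕ → ℝ) (hrmono : StrictMono rseq) (hrgt : ∀ n, lam < rseq n)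
    (hrtop : Tendsto rseq atTop atTop)
    (lamr : ℕ → ℝ) (hlamr : ∀ n, 0 < lamr n) (κ : ℝ)
    (hκ : Tendsto (fun n => rseq n * (lamr n * (∫ ω, v ω ∂μ) - 1)) atTop (nhds κ))
    (ρ : ℕ → ℝ → ℝ)
    (hρ : ∀ n x, ρ n x = lamr n * ∫ ω, Set.indicator {ω | v ω ≤ x} v ω ∂μ) :
    (∀ a : ℝ, 0 ≤ a → a < 1 →
        Tendsto (fun n => rseq n * (ρ n (a * Sinv (rseq n)) - 1)) atTop atBot) ∧
      Tendsto (fun n => rseq n * (ρ n (Sinv (rseq n)) - 1)) atTop (nhds (κ - lam)) ∧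
      (∀ a : ℝ, 1 < a →
        Tendsto (fun n => rseq n * (ρ n (a * Sinv (rseq n)) - 1)) atTop (nhds κ)) := by
  set m := ∫ ω, v ω ∂μ with hm
  set F : ℝ → ℝ := fun x => (μ {ω | x < v ω}).toReal with hFdef
  set G : ℝ → ℝ := fun x => ∫ ω, Set.indicator {ω | x < v ω} v ω ∂μ with hGdef
  have hms : ∀ x : ℝ, MeasurableSet {ω | x < v ω} := fun x => hvm measurableSet_Ioi
  have hms' : ∀ x : ℝ, MeasurableSet {ω | v ω ≤ x} := fun x => hvm measurableSet_Iic
  have hvint : Integrable v μ := by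
    refine (hv2.add (integrable_const 1)).mono hvm.aestronglyMeasurable
      (Filter.Eventually.of_forall fun ω => ?_)
    have h0 := hv0 ω
    show ‖v ω‖ ≤ ‖v ω ^ 2 + 1‖
    rw [Real.norm_eq_abs, Real.norm_eq_abs, abs_of_pos h0, abs_of_pos (by positivity)]
    nlinarith [sq_nonneg (v ω - 1)]
  have hGint : ∀ x : ℝ, Integrable (Set.indicator {ω | x < v ω} v) μ :=
    fun x => hvint.indicator (hms x)
  have hGint' : ∀ x : ℝ, Integrable (Set.indicator {ω | v ω ≤ x} v) μ :=
    fun x => hvint.indicator (hms' x)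
  have hindnn : ∀ (s : Set Ω) (ω : Ω), 0 ≤ Set.indicator s v ω :=
    fun s ω => Set.indicator_nonneg (fun ω _ => (hv0 ω).le) ω
  have hFnn : ∀ x, 0 ≤ F x := fun x => ENNReal.toReal_nonneg
  have hGnn : ∀ x, 0 ≤ G x := fun x => integral_nonneg (fun ω => hindnn _ ω)
  have hGle_m : ∀ x, G x ≤ m :=
    fun x => integral_mono (hGint x) hvint
      (fun ω => Set.indicator_le_self' (fun ω _ => (hv0 ω).le) ω)
  have hxF : ∀ x : ℝ, x * F x ≤ G x := by
    intro x
    have h := integral_mono ((integrable_const x).indicator (hms x)) (hGint x)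
      (fun ω => ?_)
    · rwa [integral_indicator_const x (hms x), smul_eq_mul, mul_comm] at h
    · by_cases hmem : ω ∈ {ω | x < v ω}
      · rw [Set.indicator_of_mem hmem, Set.indicator_of_mem hmem]
        exact (hmem : x < v ω).le
      · rw [Set.indicator_of_notMem hmem, Set.indicator_of_notMem hmem]
  have hGanti : Antitone G := by
    intro x y hxy
    exact integral_mono (hGint y) (hGint x)
      (Set.indicator_le_indicator_of_subset
        (fun ω (h : y < v ω) => lt_of_le_of_lt hxy h)
        (fun ω => (hv0 ω).le))
  have hGpos : ∀ x, 0 < G x := by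
    intro x
    have h1 : (0:ℝ) < max x 1 := lt_of_lt_of_le one_pos (le_max_right _ _)
    calc (0:ℝ) < max x 1 * F (max x 1) := mul_pos h1 (hpos _ h1.le)
      _ ≤ G (max x 1) := hxF _
      _ ≤ G x := hGanti (le_max_left _ _)
  have hm_pos : 0 < m := lt_of_lt_of_le (hGpos 0) (hGle_m 0)
  set C := ∫ ω, (v ω) ^ 2 ∂μ with hCdef
  have hC : 0 ≤ C := integral_nonneg (fun ω => sq_nonneg _)
  have hGdecay : ∀ x : ℝ, 0 < x → G x ≤ C / x := by
    intro x hx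
    have h := integral_mono (hGint x) (hv2.div_const x) (fun ω => ?_)
    · rwa [integral_div] at h
    · by_cases hmem : ω ∈ {ω | x < v ω}
      · rw [Set.indicator_of_mem hmem, le_div_iff₀ hx]
        nlinarith [mul_pos (sub_pos.mpr (show x < v ω from hmem)) (hv0 ω)]
      · rw [Set.indicator_of_notMem hmem]
        positivity
  have hFanti : Antitone F := by
    intro x y hxy
    exact ENNReal.toReal_mono (measure_ne_top μ _)
      (measure_mono (fun ω (h : y < v ω) => lt_of_le_of_lt hxy h))
  have hFcont : Continuous F := by
    have hFeq : F = fun x => 1 - (μ {ω | v ω ≤ x}).toReal := by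
      funext x
      have hc : {ω | x < v ω} = {ω | v ω ≤ x}ᶜ := by ext ω; simp [not_le]
      show (μ {ω | x < v ω}).toReal = 1 - (μ {ω | v ω ≤ x}).toReal
      rw [hc, measure_compl (hms' x) (measure_ne_top _ _), measure_univ,
        ENNReal.toReal_sub_of_le prob_le_one ENNReal.one_ne_top, ENNReal.toReal_one]
    rw [hFeq]
    exact continuous_const.sub hcdf
  have hsplit : ∀ x : ℝ, 0 ≤ x → G x ≤ 2 * x * F x + G (2 * x) := by
    intro x hx
    have hint1 : Integrable (Set.indicator {ω | x < v ω} (fun _ => 2 * x)) μ :=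
      (integrable_const (2 * x)).indicator (hms x)
    have hintS : Integrable (fun ω => Set.indicator {ω | x < v ω} (fun _ => 2 * x) ω
        + Set.indicator {ω | 2 * x < v ω} v ω) μ := hint1.add (hGint (2 * x))
    have h := integral_mono (hGint x) hintS (fun ω => ?_)
    · rw [integral_add hint1 (hGint (2 * x)), integral_indicator_const (2 * x) (hms x),
        smul_eq_mul] at h
      calc G x ≤ F x * (2 * x) + G (2 * x) := h
        _ = 2 * x * F x + G (2 * x) := by ring
    · beta_reduce
      by_cases h1 : ω ∈ {ω | x < v ω}
      · by_cases h2 : ω ∈ {ω | 2 * x < v ω}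
        · rw [Set.indicator_of_mem h1, Set.indicator_of_mem h1, Set.indicator_of_mem h2]
          linarith
        · rw [Set.indicator_of_mem h1, Set.indicator_of_mem h1, Set.indicator_of_notMem h2]
          have h2' : ¬ (2 * x < v ω) := h2
          linarith [not_lt.mp h2']
      · have h2 : ω ∉ {ω | 2 * x < v ω} := by
          intro hc
          exact h1 (Set.mem_setOf_eq ▸ lt_of_le_of_lt (by linarith) (hc : 2 * x < v ω))
        rw [Set.indicator_of_notMem h1, Set.indicator_of_notMem h1,
          Set.indicator_of_notMem h2]
        norm_num
  have hGdiff : ∀ x y : ℝ, x ≤ y → G x ≤ G y + y * F x - y * F y := by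
    intro x y hxy
    have hint1 : Integrable (Set.indicator {ω | x < v ω} (fun _ => y)) μ :=
      (integrable_const y).indicator (hms x)
    have hint2 : Integrable (Set.indicator {ω | y < v ω} (fun _ => y)) μ :=
      (integrable_const y).indicator (hms y)
    have hintA : Integrable (fun ω => Set.indicator {ω | y < v ω} v ω
        + Set.indicator {ω | x < v ω} (fun _ => y) ω) μ := (hGint y).add hint1
    have hintT : Integrable (fun ω => Set.indicator {ω | y < v ω} v ω
        + Set.indicator {ω | x < v ω} (fun _ => y) ω
        - Set.indicator {ω | y < v ω} (fun _ => y) ω) μ := hintA.sub hint2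
    have h := integral_mono (hGint x) hintT (fun ω => ?_)
    · rw [integral_sub hintA hint2, integral_add (hGint y) hint1,
        integral_indicator_const y (hms x), integral_indicator_const y (hms y),
        smul_eq_mul, smul_eq_mul] at h
      calc G x ≤ G y + F x * y - F y * y := h
        _ = G y + y * F x - y * F y := by ring
    · beta_reduce
      by_cases h2 : ω ∈ {ω | y < v ω}
      · have h1 : ω ∈ {ω | x < v ω} := lt_of_le_of_lt hxy (h2 : y < v ω)
        rw [Set.indicator_of_mem h1, Set.indicator_of_mem h1, Set.indicator_of_mem h2,
          Set.indicator_of_mem h2]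
        linarith
      · by_cases h1 : ω ∈ {ω | x < v ω}
        · rw [Set.indicator_of_mem h1, Set.indicator_of_notMem h2,
            Set.indicator_of_mem h1, Set.indicator_of_notMem h2]
          have h2' : ¬ (y < v ω) := h2
          linarith [not_lt.mp h2']
        · rw [Set.indicator_of_notMem h1, Set.indicator_of_notMem h1,
            Set.indicator_of_notMem h2, Set.indicator_of_notMem h2]
          norm_num
  have hGcont : Continuous G := by
    rw [continuous_iff_continuousAt]
    intro x₀
    rw [ContinuousAt, tendsto_iff_dist_tendsto_zero]
    have hb : Tendsto (fun x => (|x₀| + 1) * |F x - F x₀|) (nhds x₀)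
        (nhds ((|x₀| + 1) * |F x₀ - F x₀|)) :=
      (continuous_const.mul ((hFcont.sub continuous_const).abs)).tendsto x₀
    refine squeeze_zero' (Filter.Eventually.of_forall fun x => dist_nonneg) ?_ (by simpa using hb)
    have hev : ∀ᶠ x in nhds x₀, dist x x₀ < 1 :=
      Metric.ball_mem_nhds x₀ one_pos
    filter_upwards [hev] with x hx
    rw [Real.dist_eq] at hx
    rw [Real.dist_eq]
    rcases le_total x x₀ with hle | hle
    · have hd := hGdiff x x₀ hle
      have hmono : G x₀ ≤ G x := hGanti hle
      have hFmono : F x₀ ≤ F x := hFanti hle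
      rw [abs_of_nonneg (by linarith : (0:ℝ) ≤ G x - G x₀),
        abs_of_nonneg (by linarith : (0:ℝ) ≤ F x - F x₀)]
      nlinarith [le_abs_self x₀, abs_nonneg x₀, hFmono]
    · have hd := hGdiff x₀ x hle
      have hmono : G x ≤ G x₀ := hGanti hle
      have hFmono : F x ≤ F x₀ := hFanti hle
      rw [abs_of_nonpos (by linarith : G x - G x₀ ≤ (0:ℝ)),
        abs_of_nonpos (by linarith : F x - F x₀ ≤ (0:ℝ))]
      have hxb : x ≤ |x₀| + 1 := by
        have := abs_le.mp (le_of_lt hx)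
        have := le_abs_self x₀
        linarith [this]
      nlinarith [hFmono]
  obtain ⟨X₁, hX₁1, hX₁⟩ : ∃ X₁ : ℝ, 1 ≤ X₁ ∧ ∀ x, X₁ ≤ x → F (2 * x) ≤ F x / 4 := by
    have h := (hrv 2 one_lt_two).eventually_lt_const (show (0:ℝ) < 1/4 by norm_num)
    rcases eventually_atTop.1 h with ⟨X₀, hX₀⟩
    refine ⟨max X₀ 1, le_max_right _ _, fun x hx => ?_⟩
    have hx1 : (1:ℝ) ≤ x := le_trans (le_max_right X₀ 1) hx
    have hFx : 0 < F x := hpos x (by linarith)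
    have h2 := hX₀ x (le_trans (le_max_left X₀ 1) hx)
    have h3 : F (2 * x) / F x < 1/4 := h2
    rw [div_lt_iff₀ hFx] at h3
    linarith
  have hX₁0 : (0:ℝ) < X₁ := lt_of_lt_of_le one_pos hX₁1
  have keyA : ∀ n : ℕ, ∀ x, X₁ ≤ x → G x ≤ 4 * x * F x + C / (2 ^ n * x) := by
    intro n
    induction n with
    | zero =>
      intro x hx
      have hx0 : 0 < x := lt_of_lt_of_le hX₁0 hx
      have h1 := hGdecay x hx0
      have h2 : 0 ≤ 4 * x * F x := by
        have := hFnn x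
        positivity
      simpa using by linarith [h1, h2]
    | succ n ih =>
      intro x hx
      have hx0 : 0 < x := lt_of_lt_of_le hX₁0 hx
      have h1 := hsplit x hx0.le
      have h2 := ih (2 * x) (by linarith)
      have h3 := hX₁ x hx
      have hF2x := hFnn (2 * x)
      have heq : C / (2 ^ n * (2 * x)) = C / (2 ^ (n + 1) * x) := by
        congr 1
        ring
      rw [heq] at h2
      nlinarith [h2, h3, h1]
  have hGA : ∀ x, X₁ ≤ x → G x ≤ 4 * x * F x := by
    intro x hx
    have hx0 : 0 < x := lt_of_lt_of_le hX₁0 hx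
    have heq : ∀ n : ℕ, C / (2 ^ n * x) = (C / x) * (1/2 : ℝ) ^ n := by
      intro n
      rw [div_pow, one_pow, div_mul_div_comm, mul_one, mul_comm x]
    have ht : Tendsto (fun n : ℕ => 4 * x * F x + C / (2 ^ n * x)) atTop
        (nhds (4 * x * F x)) := by
      have h0 : Tendsto (fun n : ℕ => (C / x) * (1/2 : ℝ) ^ n) atTop (nhds 0) := by
        simpa using (tendsto_pow_atTop_nhds_zero_of_lt_one (by norm_num : (0:ℝ) ≤ 1/2)
          (by norm_num : (1/2:ℝ) < 1)).const_mul (C / x)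
      have := (tendsto_const_nhds : Tendsto (fun _ : ℕ => 4 * x * F x) atTop
        (nhds (4 * x * F x))).add h0
      rw [add_zero] at this
      exact this.congr fun n => by rw [heq n]
    exact ge_of_tendsto ht (Filter.Eventually.of_forall fun n => keyA n x hx)
  have hGrv : ∀ t : ℝ, 1 < t → Tendsto (fun x => G (t * x) / G x) atTop (nhds 0) := by
    intro t ht
    have hg : Tendsto (fun x => 4 * t * (F (t * x) / F x)) atTop (nhds 0) := by
      simpa using (hrv t ht).const_mul (4 * t)
    refine squeeze_zero'
      (Filter.Eventually.of_forall fun x => div_nonneg (hGnn _) (hGnn _)) ?_ hg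
    filter_upwards [eventually_ge_atTop X₁] with x hx
    have hx0 : 0 < x := lt_of_lt_of_le hX₁0 hx
    have htx : X₁ ≤ t * x := by nlinarith
    have hFx : 0 < F x := hpos x hx0.le
    have h1 : G (t * x) ≤ 4 * (t * x) * F (t * x) := hGA _ htx
    have h3 : G (t * x) / G x ≤ (4 * (t * x) * F (t * x)) / (x * F x) := by
      refine div_le_div₀ ?_ h1 (mul_pos hx0 hFx) (hxF x)
      have := hFnn (t * x)
      nlinarith
    have h4 : (4 * (t * x) * F (t * x)) / (x * F x) = 4 * t * (F (t * x) / F x) := by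
      field_simp
    linarith [h3, h4.le, h4.ge]
  have hG0 : G 0 = m := by
    have huniv : {ω | (0:ℝ) < v ω} = Set.univ := Set.eq_univ_of_forall fun ω => hv0 ω
    show (∫ ω, Set.indicator {ω | (0:ℝ) < v ω} v ω ∂μ) = m
    rw [huniv]
    simp [Set.indicator_univ]
    exact hm.symm
  have hlam_pos : 0 < lam := by rw [hlam]; positivity
  have hrpos : ∀ n, 0 < rseq n := fun n => lt_trans hlam_pos (hrgt n)
  have hsetdesc : ∀ n, {x : ℝ | 0 ≤ x ∧ rseq n < S x}
      = {x : ℝ | 0 ≤ x ∧ G x < 1 / rseq n} := by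
    intro n
    ext x
    simp only [Set.mem_setOf_eq]
    refine and_congr_right fun hx0 => ?_
    rw [hS x]
    show rseq n < 1 / G x ↔ G x < 1 / rseq n
    rw [lt_div_iff₀ (hGpos x), lt_div_iff₀ (hrpos n)]
    constructor <;> intro h <;> nlinarith
  have hSne : ∀ n, Set.Nonempty {x : ℝ | 0 ≤ x ∧ G x < 1 / rseq n} := by
    intro n
    refine ⟨max 1 (C * rseq n + 1), le_trans zero_le_one (le_max_left _ _), ?_⟩
    set X := max 1 (C * rseq n + 1) with hXdef
    have hX0 : (0:ℝ) < X := lt_of_lt_of_le one_pos (le_max_left _ _)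
    have h1 : G X ≤ C / X := hGdecay X hX0
    have h2 : C / X < 1 / rseq n := by
      rw [div_lt_div_iff₀ hX0 (hrpos n)]
      have := le_max_right 1 (C * rseq n + 1)
      linarith
    linarith
  have hbdd : ∀ n, BddBelow {x : ℝ | 0 ≤ x ∧ G x < 1 / rseq n} :=
    fun n => ⟨0, fun y hy => hy.1⟩
  have hcdef : ∀ n, Sinv (rseq n) = sInf {x : ℝ | 0 ≤ x ∧ G x < 1 / rseq n} := by
    intro n
    rw [hSinv, hsetdesc n]
  have hc0 : ∀ n, 0 ≤ Sinv (rseq n) := by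
    intro n
    rw [hcdef n]
    exact le_csInf (hSne n) fun y hy => hy.1
  have hGc : ∀ n, G (Sinv (rseq n)) = 1 / rseq n := by
    intro n
    rw [hcdef n]
    set T := {x : ℝ | 0 ≤ x ∧ G x < 1 / rseq n} with hT
    have hup : G (sInf T) ≤ 1 / rseq n := by
      obtain ⟨u, hu_anti, hu_tend, hu_mem⟩ := exists_seq_tendsto_sInf (hSne n) (hbdd n)
      have htend : Tendsto (fun k => G (u k)) atTop (nhds (G (sInf T))) :=
        (hGcont.tendsto _).comp hu_tend
      exact le_of_tendsto htend (Filter.Eventually.of_forall fun k => (hu_mem k).2.le)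
    have hlow : 1 / rseq n ≤ G (sInf T) := by
      by_contra h
      push_neg at h
      have hc0' : 0 ≤ sInf T := le_csInf (hSne n) fun y hy => hy.1
      rcases eq_or_lt_of_le hc0' with hc00 | hcpos
      · have h1r : 1 / rseq n < 1 / lam := one_div_lt_one_div_of_lt hlam_pos (hrgt n)
        have hlm : 1 / lam = m := by rw [hlam, one_div_one_div]
        rw [← hc00, hG0] at h
        linarith
      · have hev := (hGcont.tendsto (sInf T)).eventually_lt_const h
        obtain ⟨δ, hδ0, hδ⟩ := Metric.eventually_nhds_iff.1 hev
        set y := max (sInf T - δ/2) (sInf T / 2) with hydef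
        have hy0 : 0 ≤ y := le_trans (by linarith : (0:ℝ) ≤ sInf T / 2) (le_max_right _ _)
        have hylt : y < sInf T := max_lt (by linarith) (by linarith)
        have hydist : dist y (sInf T) < δ := by
          rw [Real.dist_eq, abs_of_nonpos (by linarith)]
          have := le_max_left (sInf T - δ/2) (sInf T / 2)
          linarith
        have hyT : y ∈ T := ⟨hy0, hδ hydist⟩
        exact absurd (csInf_le (hbdd n) hyT) (not_le.2 hylt)
    linarith
  have hc_top : Tendsto (fun n => Sinv (rseq n)) atTop atTop := by
    rw [tendsto_atTop]
    intro M
    have h1 : Tendsto (fun n => 1 / rseq n) atTop (nhds 0) := by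
      exact hrtop.inv_tendsto_atTop.congr fun n => (one_div (rseq n)).symm
    have hGM : 0 < G (max M 0) := hGpos _
    filter_upwards [h1.eventually_lt_const hGM] with n hn
    by_contra hlt
    push_neg at hlt
    have hle : Sinv (rseq n) ≤ max M 0 := le_trans hlt.le (le_max_left M 0)
    have := hGanti hle
    rw [hGc n] at this
    linarith
  have hsplitInt : ∀ x : ℝ, (∫ ω, Set.indicator {ω | v ω ≤ x} v ω ∂μ) = m - G x := by
    intro x
    have hpt : ∀ ω, Set.indicator {ω | v ω ≤ x} v ω + Set.indicator {ω | x < v ω} v ω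
        = v ω := by
      intro ω
      by_cases h : v ω ≤ x
      · simp [Set.indicator_apply, Set.mem_setOf_eq, h, not_lt.mpr h]
      · simp [Set.indicator_apply, Set.mem_setOf_eq, h, not_le.mp h]
    have h2 := integral_add (hGint' x) (hGint x)
    simp only [hpt] at h2
    have : (∫ ω, v ω ∂μ) = (∫ ω, Set.indicator {ω | v ω ≤ x} v ω ∂μ) + G x := h2
    rw [hm]
    linarith
  have hρG : ∀ n x, ρ n x = lamr n * (m - G x) := by
    intro n x
    rw [hρ, hsplitInt]
  have hkey : ∀ n x, rseq n * (ρ n x - 1)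
      = rseq n * (lamr n * m - 1) - lamr n * (rseq n * G x) := by
    intro n x
    rw [hρG]
    ring
  have hlamr_lim : Tendsto lamr atTop (nhds lam) := by
    have h0 : Tendsto (fun n => (rseq n)⁻¹) atTop (nhds 0) := hrtop.inv_tendsto_atTop
    have h1 : Tendsto (fun n => rseq n * (lamr n * m - 1) * (rseq n)⁻¹) atTop
        (nhds (κ * 0)) := hκ.mul h0
    rw [mul_zero] at h1
    have h2 : Tendsto (fun n => lamr n * m - 1) atTop (nhds 0) := by
      refine h1.congr fun n => ?_
      rw [mul_comm (rseq n), mul_assoc, mul_inv_cancel₀ (ne_of_gt (hrpos n)), mul_one]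
    have h3 : Tendsto (fun n => ((lamr n * m - 1) + 1) / m) atTop (nhds ((0 + 1) / m)) :=
      (h2.add tendsto_const_nhds).div_const m
    have h4 : ((0:ℝ) + 1) / m = lam := by rw [hlam, zero_add]
    rw [h4] at h3
    refine h3.congr fun n => ?_
    field_simp
    ring
  have hrG : ∀ (n : ℕ) (x : ℝ), rseq n * G x = G x / G (Sinv (rseq n)) := by
    intro n x
    rw [hGc n]
    field_simp [ne_of_gt (hrpos n)]
  refine ⟨?_, ?_, ?_⟩
  · -- a ∈ [0, 1)
    intro a ha0 ha1
    have hB : Tendsto (fun n => rseq n * G (a * Sinv (rseq n))) atTop atTop := by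
      rcases eq_or_lt_of_le ha0 with h0 | hpos_a
      · have := hrtop.atTop_mul_const (hGpos 0)
        refine this.congr fun n => ?_
        rw [← h0, zero_mul, mul_comm]
      · have hinv : 1 < 1 / a := one_lt_one_div hpos_a ha1
        have hmul : Tendsto (fun n => a * Sinv (rseq n)) atTop atTop :=
          hc_top.const_mul_atTop hpos_a
        have hD : Tendsto (fun n => G (Sinv (rseq n)) / G (a * Sinv (rseq n))) atTop
            (nhds 0) := by
          have h := (hGrv (1/a) hinv).comp hmul
          refine h.congr fun n => ?_
          have : (1/a) * (a * Sinv (rseq n)) = Sinv (rseq n) := by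
            field_simp
          rw [Function.comp_apply, this]
        have hD' : Tendsto (fun n => G (Sinv (rseq n)) / G (a * Sinv (rseq n))) atTop
            (nhdsWithin 0 (Set.Ioi 0)) :=
          tendsto_nhdsWithin_iff.mpr ⟨hD, Filter.Eventually.of_forall fun n =>
            div_pos (hGpos _) (hGpos _)⟩
        have hInv := hD'.inv_tendsto_nhdsGT_zero
        refine hInv.congr fun n => ?_
        rw [Pi.inv_apply, inv_div, ← hrG]
    have hB2 : Tendsto (fun n => lamr n * (rseq n * G (a * Sinv (rseq n)))) atTop atTop :=
      Tendsto.pos_mul_atTop hlam_pos hlamr_lim hB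
    have hneg : Tendsto (fun n => -(lamr n * (rseq n * G (a * Sinv (rseq n))))) atTop
        atBot := tendsto_neg_atTop_atBot.comp hB2
    have hfin := hκ.add_atBot hneg
    refine hfin.congr fun n => ?_
    rw [hkey]
    ring
  · -- a = 1
    have hone : ∀ n, rseq n * G (Sinv (rseq n)) = 1 := by
      intro n
      rw [hGc n, mul_one_div, div_self (ne_of_gt (hrpos n))]
    have hlim : Tendsto (fun n => rseq n * (lamr n * m - 1) - lamr n * 1) atTop
        (nhds (κ - lam * 1)) := hκ.sub (hlamr_lim.mul_const 1)
    rw [mul_one] at hlim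
    refine hlim.congr fun n => ?_
    rw [hkey, hone]
  · -- a > 1
    intro a ha
    have h1 : Tendsto (fun n => G (a * Sinv (rseq n)) / G (Sinv (rseq n))) atTop
        (nhds 0) := by
      have h := (hGrv a ha).comp hc_top
      exact h.congr fun n => by rw [Function.comp_apply]
    have h2 : Tendsto (fun n => lamr n * (rseq n * G (a * Sinv (rseq n)))) atTop
        (nhds (lam * 0)) := by
      refine hlamr_lim.mul (h1.congr fun n => ?_)
      rw [← hrG]
    rw [mul_zero] at h2
    have hfin := hκ.sub h2
    rw [sub_zero] at hfin
    refine hfin.congr fun n => ?_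
    rw [hkey]
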